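/- Let G be a 3-connected graph in 𝒢₂ such that every 3-cutset of G is stable, and suppose G is not isomorphic to the Petersen graph. Then G has no induced subgraph isomorphic to the graph obtained from the Petersen graph by deleting exactly one edge (keeping all ten vertices). -/

import Mathlib

open SimpleGraph

/-- A *hole* of length `n` in `G`: an induced cycle of length `n ≥ 4`. -/
def SimpleGraph.HasHole {V : Type*} (G : SimpleGraph V) (n : ℕ) : Prop :=
  4 ≤ n ∧ ∃ (v : V) (w : G.Walk v v), w.IsCycle ∧ w.toSubgraph.IsInduced ∧ w.length = n

/-- `G ∈ 𝒢_ℓ`: `G` has girth `2ℓ+1` and no odd hole of length at least `2ℓ+3`. -/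
def SimpleGraph.MemGFamily {V : Type*} (G : SimpleGraph V) (l : ℕ) : Prop :=
  G.egirth = (2 * l + 1 : ℕ) ∧ ∀ n : ℕ, Odd n → 2 * l + 3 ≤ n → ¬ G.HasHole n

/-- `X` is a cutset of `G`: deleting the vertices of `X` disconnects `G`. -/
def SimpleGraph.IsCutset {V : Type*} (G : SimpleGraph V) (X : Set V) : Prop :=
  ¬ (G.induce (Xᶜ : Set V)).Connected

/-- `G` is 3-connected: more than 3 vertices, and deleting any at most 2 vertices
leaves a connected graph. -/
def SimpleGraph.ThreeConnected {V : Type*} [Fintype V] (G : SimpleGraph V) : Prop :=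
  3 < Fintype.card V ∧ ∀ X : Set V, X.ncard ≤ 2 → (G.induce (Xᶜ : Set V)).Connected

/-- The Petersen graph, realized as the Kneser graph of 2-element subsets of a 5-set:
two 2-subsets are adjacent iff they are disjoint. -/
def petersen : SimpleGraph {s : Finset (Fin 5) // s.card = 2} where
  Adj a b := Disjoint (a : Finset (Fin 5)) (b : Finset (Fin 5))
  symm := ⟨fun a b h => h.symm⟩
  loopless := ⟨fun a h => by
    have h' : (a : Finset (Fin 5)) = ∅ := by simpa using disjoint_self.mp h
    have := a.property
    rw [h'] at this
    simp at this⟩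

abbrev PP := {s : Finset (Fin 5) // s.card = 2}

instance : DecidableRel petersen.Adj := fun a b =>
  inferInstanceAs (Decidable (Disjoint (a : Finset (Fin 5)) (b : Finset (Fin 5))))

def V01 : PP := ⟨{0,1}, by decide⟩
def V02 : PP := ⟨{0,2}, by decide⟩
def V03 : PP := ⟨{0,3}, by decide⟩
def V04 : PP := ⟨{0,4}, by decide⟩
def V12 : PP := ⟨{1,2}, by decide⟩
def V13 : PP := ⟨{1,3}, by decide⟩
def V14 : PP := ⟨{1,4}, by decide⟩
def V23 : PP := ⟨{2,3}, by decide⟩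
def V24 : PP := ⟨{2,4}, by decide⟩
def V34 : PP := ⟨{3,4}, by decide⟩
def tabE (a b : PP) : List PP :=
  if a = V01 then
    (if b = V02 then [V02, V14, V03, V24, V01]
    else if b = V03 then [V03, V14, V02, V34, V01]
    else if b = V04 then [V04, V12, V03, V24, V01]
    else if b = V12 then [V12, V04, V13, V24, V01]
    else if b = V13 then [V13, V04, V12, V34, V01]
    else if b = V14 then [V14, V02, V13, V24, V01]
    else if b = V23 then [V23, V04, V12, V34, V01]
    else [])
  else if a = V02 then
    (if b = V01 then [V01, V24, V03, V14, V02]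
    else if b = V03 then [V03, V12, V04, V13, V02]
    else if b = V04 then [V04, V12, V03, V14, V02]
    else if b = V12 then [V12, V03, V24, V13, V02]
    else if b = V23 then [V23, V04, V12, V34, V02]
    else if b = V24 then [V24, V03, V12, V34, V02]
    else [])
  else if a = V03 then
    (if b = V01 then [V01, V34, V02, V14, V03]
    else if b = V02 then [V02, V13, V04, V12, V03]
    else if b = V04 then [V04, V13, V02, V14, V03]
    else if b = V13 then [V13, V02, V34, V12, V03]
    else if b = V23 then [V23, V04, V13, V24, V03]
    else if b = V34 then [V34, V02, V13, V24, V03]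
    else [])
  else if a = V04 then
    (if b = V01 then [V01, V24, V03, V12, V04]
    else if b = V02 then [V02, V14, V03, V12, V04]
    else if b = V03 then [V03, V14, V02, V13, V04]
    else if b = V14 then [V14, V02, V34, V12, V04]
    else if b = V24 then [V24, V01, V34, V12, V04]
    else if b = V34 then [V34, V01, V24, V13, V04]
    else [])
  else if a = V12 then
    (if b = V01 then [V01, V24, V13, V04, V12]
    else if b = V02 then [V02, V13, V24, V03, V12]
    else if b = V13 then [V13, V02, V14, V03, V12]
    else if b = V14 then [V14, V02, V13, V04, V12]
    else if b = V23 then [V23, V14, V02, V34, V12]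
    else if b = V24 then [V24, V13, V02, V34, V12]
    else [])
  else if a = V13 then
    (if b = V01 then [V01, V34, V12, V04, V13]
    else if b = V03 then [V03, V12, V34, V02, V13]
    else if b = V12 then [V12, V03, V14, V02, V13]
    else if b = V14 then [V14, V03, V12, V04, V13]
    else if b = V23 then [V23, V14, V03, V24, V13]
    else if b = V34 then [V34, V12, V03, V24, V13]
    else [])
  else if a = V14 then
    (if b = V01 then [V01, V24, V13, V02, V14]
    else if b = V04 then [V04, V12, V34, V02, V14]
    else if b = V12 then [V12, V04, V13, V02, V14]
    else if b = V13 then [V13, V04, V12, V03, V14]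
    else if b = V24 then [V24, V01, V34, V02, V14]
    else if b = V34 then [V34, V01, V24, V03, V14]
    else [])
  else if a = V23 then
    (if b = V01 then [V01, V24, V03, V14, V23]
    else if b = V02 then [V02, V34, V12, V04, V23]
    else if b = V03 then [V03, V24, V13, V04, V23]
    else if b = V12 then [V12, V34, V02, V14, V23]
    else if b = V13 then [V13, V24, V03, V14, V23]
    else if b = V24 then [V24, V03, V12, V04, V23]
    else if b = V34 then [V34, V02, V13, V04, V23]
    else [])
  else if a = V24 then
    (if b = V02 then [V02, V34, V12, V03, V24]
    else if b = V04 then [V04, V12, V34, V01, V24]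
    else if b = V12 then [V12, V34, V02, V13, V24]
    else if b = V14 then [V14, V02, V34, V01, V24]
    else if b = V23 then [V23, V04, V12, V03, V24]
    else if b = V34 then [V34, V02, V14, V03, V24]
    else [])
  else if a = V34 then
    (if b = V03 then [V03, V24, V13, V02, V34]
    else if b = V04 then [V04, V13, V24, V01, V34]
    else if b = V13 then [V13, V24, V03, V12, V34]
    else if b = V14 then [V14, V03, V24, V01, V34]
    else if b = V23 then [V23, V04, V13, V02, V34]
    else if b = V24 then [V24, V03, V14, V02, V34]
    else [])
  else []
def tabO (a b : PP) : List PP :=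
  if a = V01 then
    (if b = V02 then [V02, V13, V24, V01]
    else if b = V03 then [V03, V12, V34, V01]
    else if b = V04 then [V04, V23, V14, V02, V34, V01]
    else if b = V12 then [V12, V03, V24, V01]
    else if b = V13 then [V13, V02, V34, V01]
    else if b = V14 then [V14, V23, V04, V12, V34, V01]
    else if b = V23 then [V23, V04, V12, V03, V24, V01]
    else [])
  else if a = V02 then
    (if b = V01 then [V01, V24, V13, V02]
    else if b = V03 then [V03, V12, V34, V02]
    else if b = V04 then [V04, V12, V34, V02]
    else if b = V12 then [V12, V03, V14, V02]
    else if b = V23 then [V23, V04, V13, V02]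
    else if b = V24 then [V24, V01, V34, V02]
    else [])
  else if a = V03 then
    (if b = V01 then [V01, V34, V12, V03]
    else if b = V02 then [V02, V13, V24, V03]
    else if b = V04 then [V04, V13, V24, V03]
    else if b = V13 then [V13, V02, V14, V03]
    else if b = V23 then [V23, V04, V12, V03]
    else if b = V34 then [V34, V01, V24, V03]
    else [])
  else if a = V04 then
    (if b = V01 then [V01, V24, V03, V14, V23, V04]
    else if b = V02 then [V02, V14, V23, V04]
    else if b = V03 then [V03, V14, V23, V04]
    else if b = V14 then [V14, V02, V13, V04]
    else if b = V24 then [V24, V03, V12, V04]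
    else if b = V34 then [V34, V02, V13, V04]
    else [])
  else if a = V12 then
    (if b = V01 then [V01, V24, V03, V12]
    else if b = V02 then [V02, V13, V04, V12]
    else if b = V13 then [V13, V02, V34, V12]
    else if b = V14 then [V14, V02, V34, V12]
    else if b = V23 then [V23, V14, V03, V12]
    else if b = V24 then [V24, V01, V34, V12]
    else [])
  else if a = V13 then
    (if b = V01 then [V01, V34, V02, V13]
    else if b = V03 then [V03, V12, V04, V13]
    else if b = V12 then [V12, V03, V24, V13]
    else if b = V14 then [V14, V03, V24, V13]
    else if b = V23 then [V23, V14, V02, V13]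
    else if b = V34 then [V34, V01, V24, V13]
    else [])
  else if a = V14 then
    (if b = V01 then [V01, V24, V13, V04, V23, V14]
    else if b = V04 then [V04, V12, V03, V14]
    else if b = V12 then [V12, V04, V23, V14]
    else if b = V13 then [V13, V04, V23, V14]
    else if b = V24 then [V24, V13, V02, V14]
    else if b = V34 then [V34, V12, V03, V14]
    else [])
  else if a = V23 then
    (if b = V01 then [V01, V24, V03, V12, V04, V23]
    else if b = V02 then [V02, V13, V04, V23]
    else if b = V03 then [V03, V12, V04, V23]
    else if b = V12 then [V12, V03, V14, V23]
    else if b = V13 then [V13, V02, V14, V23]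
    else if b = V24 then [V24, V01, V34, V02, V14, V23]
    else if b = V34 then [V34, V01, V24, V03, V14, V23]
    else [])
  else if a = V24 then
    (if b = V02 then [V02, V14, V03, V24]
    else if b = V04 then [V04, V12, V03, V24]
    else if b = V12 then [V12, V04, V13, V24]
    else if b = V14 then [V14, V02, V13, V24]
    else if b = V23 then [V23, V04, V12, V34, V01, V24]
    else if b = V34 then [V34, V02, V13, V24]
    else [])
  else if a = V34 then
    (if b = V03 then [V03, V14, V02, V34]
    else if b = V04 then [V04, V13, V02, V34]
    else if b = V13 then [V13, V04, V12, V34]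
    else if b = V14 then [V14, V03, V12, V34]
    else if b = V23 then [V23, V04, V13, V24, V01, V34]
    else if b = V24 then [V24, V03, V12, V34]
    else [])
  else []
def e₀ : Sym2 PP := s(V01, V23)

def H₀ : SimpleGraph PP := petersen.deleteEdges {e₀}

instance : DecidableRel H₀.Adj := fun a b =>
  decidable_of_iff (petersen.Adj a b ∧ ¬ s(a,b) = e₀) (by
    show _ ↔ (petersen.deleteEdges {e₀}).Adj a b
    rw [SimpleGraph.deleteEdges_adj]; simp [Set.mem_singleton_iff])

/-- bundled properties of a data path `L` (from `β` to `α`) witnessing parity data. -/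
def PathOK (α β : PP) (L : List PP) : Prop :=
  2 ≤ L.length ∧ L.getD 0 α = β ∧ L.getD (L.length - 1) α = α ∧
  (∀ i < L.length - 1, H₀.Adj (L.getD i α) (L.getD (i+1) α)) ∧
  (∀ i < L.length, ∀ j < L.length, L.getD i α = L.getD j α → i = j) ∧
  (∀ i < L.length, ∀ j < L.length, H₀.Adj (L.getD i α) (L.getD j α) → j = i + 1 ∨ i = j + 1) ∧
  (∀ j < L.length - 1, 0 < j → ¬(H₀.Adj (L.getD j α) α ∧ H₀.Adj (L.getD j α) β))

instance (α β L) : Decidable (PathOK α β L) := by unfold PathOK; infer_instance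

theorem dataE : ∀ α β : PP, α ≠ β → ¬ H₀.Adj α β →
    PathOK α β (tabE α β) ∧ (tabE α β).length = 5 := by decide

theorem dataO : ∀ α β : PP, α ≠ β → ¬ H₀.Adj α β →
    PathOK α β (tabO α β) ∧ ((tabO α β).length = 4 ∧ (∃ γ, H₀.Adj α γ ∧ H₀.Adj β γ) ∨
      (tabO α β).length = 6) := by decide

theorem factN : ∀ γ : PP, H₀.Adj V01 γ ↔ (γ = V24 ∨ γ = V34) := by decide

theorem factD : V01 ≠ V23 ∧ V01 ≠ V24 ∧ V01 ≠ V34 ∧ V23 ≠ V24 ∧ V23 ≠ V34 ∧ V24 ≠ V34 := by decide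

/-- no three vertices pairwise non-adjacent with no common neighbour -/
theorem factF2 : ∀ α β γ : PP, ¬(α ≠ β ∧ α ≠ γ ∧ β ≠ γ ∧
    ¬ H₀.Adj α β ∧ ¬ H₀.Adj α γ ∧ ¬ H₀.Adj β γ ∧
    (∀ δ, ¬(H₀.Adj α δ ∧ H₀.Adj β δ)) ∧ (∀ δ, ¬(H₀.Adj α δ ∧ H₀.Adj γ δ)) ∧
    (∀ δ, ¬(H₀.Adj β δ ∧ H₀.Adj γ δ))) := by decide

section Bridge

variable {W : Type*} {G : SimpleGraph W}

def mkWalk (G : SimpleGraph W) : (m : ℕ) → (c : ℕ → W) → (∀ j < m, G.Adj (c j) (c (j+1))) →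
    G.Walk (c 0) (c m)
  | 0, _, _ => Walk.nil
  | (m+1), c, h => Walk.cons (h 0 (Nat.succ_pos m))
      (mkWalk G m (fun j => c (j+1)) (fun j hj => h (j+1) (by omega)))

theorem length_mkWalk : ∀ (m : ℕ) (c : ℕ → W) (h : ∀ j < m, G.Adj (c j) (c (j+1))),
    (mkWalk G m c h).length = m
  | 0, _, _ => rfl
  | (m+1), c, h => by
      simp only [mkWalk, Walk.length_cons, length_mkWalk m]

theorem support_mkWalk : ∀ (m : ℕ) (c : ℕ → W) (h : ∀ j < m, G.Adj (c j) (c (j+1))),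
    (mkWalk G m c h).support = (List.range (m+1)).map c
  | 0, c, _ => by simp [mkWalk, List.range_succ]
  | (m+1), c, h => by
      rw [mkWalk, Walk.support_cons, support_mkWalk m, List.range_succ_eq_map (n := m+1),
        List.map_cons, List.map_map]
      rfl

theorem edges_mkWalk : ∀ (m : ℕ) (c : ℕ → W) (h : ∀ j < m, G.Adj (c j) (c (j+1))),
    (mkWalk G m c h).edges = (List.range m).map (fun j => s(c j, c (j+1)))
  | 0, c, _ => by simp [mkWalk, List.range_succ]
  | (m+1), c, h => by
      rw [mkWalk, Walk.edges_cons, edges_mkWalk m, List.range_succ_eq_map (n := m),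
        List.map_cons, List.map_map]
      rfl

theorem cycle_exists (n : ℕ) (h3 : 3 ≤ n) (c : ℕ → W) (hcyc : c n = c 0)
    (hadj : ∀ j < n, G.Adj (c j) (c (j+1)))
    (hinj : ∀ i < n, ∀ j < n, c i = c j → i = j) :
    ∃ w : G.Walk (c 0) (c 0), w.IsCycle ∧ w.length = n ∧
      w.support = (List.range (n+1)).map c ∧
      w.edges = (List.range n).map (fun j => s(c j, c (j+1))) := by
  refine ⟨(mkWalk G n c hadj).copy rfl hcyc, ?_, ?_, ?_, ?_⟩
  · rw [Walk.isCycle_def]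
    refine ⟨?_, ?_, ?_⟩
    · rw [Walk.isTrail_def, Walk.edges_copy, edges_mkWalk]
      refine List.Nodup.map_on ?_ List.nodup_range
      intro i hi j hj hij
      rw [List.mem_range] at hi hj
      rw [Sym2.eq_iff] at hij
      rcases hij with ⟨h1, _⟩ | ⟨h1, h2⟩
      · exact hinj i hi j hj h1
      · -- c i = c (j+1), c (i+1) = c j
        rcases Nat.lt_or_ge (j+1) n with hj1 | hj1
        · have hij' : i = j + 1 := hinj i hi (j+1) hj1 h1
          rcases Nat.lt_or_ge (i+1) n with hi1 | hi1
          · have := hinj (i+1) hi1 j hj h2; omega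
          · have hin : i + 1 = n := by omega
            have h0 : c 0 = c j := by rw [← hcyc, ← hin]; exact h2
            have := hinj 0 (by omega) j hj h0; omega
        · have hjn : j + 1 = n := by omega
          have h0 : c i = c 0 := by rw [← hcyc, ← hjn]; exact h1
          have hi0 : i = 0 := hinj i hi 0 (by omega) h0
          rcases Nat.lt_or_ge (i+1) n with hi1 | hi1
          · have := hinj (i+1) hi1 j hj h2; omega
          · omega
    · intro hnil
      have : ((mkWalk G n c hadj).copy rfl hcyc).length = 0 := by rw [hnil]; rfl
      rw [Walk.length_copy, length_mkWalk] at this; omega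
    · rw [Walk.support_copy, support_mkWalk, List.range_succ_eq_map, List.map_cons,
        List.tail_cons, List.map_map]
      refine List.Nodup.map_on ?_ List.nodup_range
      intro i hi j hj hij
      rw [List.mem_range] at hi hj
      simp only [Function.comp] at hij
      rcases Nat.lt_or_ge (i+1) n with hi1 | hi1
      · rcases Nat.lt_or_ge (j+1) n with hj1 | hj1
        · exact Nat.succ_injective (hinj _ hi1 _ hj1 hij)
        · have hjn : j + 1 = n := by omega
          have h0 : c (i+1) = c 0 := by rw [← hcyc, ← hjn]; exact hij
          have := hinj _ hi1 0 (by omega) h0; omega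
      · have hin : i + 1 = n := by omega
        rcases Nat.lt_or_ge (j+1) n with hj1 | hj1
        · have h0 : c 0 = c (j+1) := by rw [← hcyc, ← hin]; exact hij
          have := hinj 0 (by omega) _ hj1 h0; omega
        · omega
  · rw [Walk.length_copy, length_mkWalk]
  · rw [Walk.support_copy, support_mkWalk]
  · rw [Walk.edges_copy, edges_mkWalk]

theorem hasHole_of_fn (n : ℕ) (h4 : 4 ≤ n) (c : ℕ → W) (hcyc : c n = c 0)
    (hadj : ∀ j < n, G.Adj (c j) (c (j+1)))
    (hinj : ∀ i < n, ∀ j < n, c i = c j → i = j)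
    (hind : ∀ i < n, ∀ j < n, G.Adj (c i) (c j) →
      j = i + 1 ∨ i = j + 1 ∨ (i = 0 ∧ j = n-1) ∨ (j = 0 ∧ i = n-1)) :
    G.HasHole n := by
  obtain ⟨w, hcycle, hlen, hsupp, hedges⟩ := cycle_exists n (by omega) c hcyc hadj hinj
  refine ⟨h4, c 0, w, hcycle, ?_, hlen⟩
  intro v hv v' hv' hadj'
  rw [Walk.mem_verts_toSubgraph, hsupp, List.mem_map] at hv hv'
  obtain ⟨i0, hi0, hv⟩ := hv
  obtain ⟨j0, hj0, hv'⟩ := hv'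
  rw [List.mem_range] at hi0 hj0
  have hnorm : ∀ m, m < n + 1 → ∃ m' , m' < n ∧ c m' = c m := by
    intro m hm
    by_cases h : m = n
    · exact ⟨0, by omega, by rw [h, hcyc]⟩
    · exact ⟨m, by omega, rfl⟩
  obtain ⟨i, hilt, hci'⟩ := hnorm i0 hi0
  obtain ⟨j, hjlt, hcj'⟩ := hnorm j0 hj0
  have hci : c i = v := by rw [hci', hv]
  have hcj : c j = v' := by rw [hcj', hv']
  have hadj'' : G.Adj (c i) (c j) := by rw [hci, hcj]; exact hadj'
  have hedge : ∀ m < n, s(c m, c (m+1)) ∈ w.edges := by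
    intro m hm
    rw [hedges, List.mem_map]
    exact ⟨m, List.mem_range.mpr hm, rfl⟩
  have key : s(v, v') ∈ w.edges := by
    rcases hind i hilt j hjlt hadj'' with h | h | ⟨h1, h2⟩ | ⟨h1, h2⟩
    · rw [← hci, ← hcj, h]; exact hedge i hilt
    · rw [← hci, ← hcj, h, Sym2.eq_swap]; exact hedge j hjlt
    · rw [← hci, ← hcj, h1, h2]
      have : s(c (n-1), c ((n-1)+1)) ∈ w.edges := hedge (n-1) (by omega)
      have heq : (n-1)+1 = n := by omega
      rw [heq, hcyc, Sym2.eq_swap] at this; exact this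
    · rw [← hci, ← hcj, h1, h2]
      have : s(c (n-1), c ((n-1)+1)) ∈ w.edges := hedge (n-1) (by omega)
      have heq : (n-1)+1 = n := by omega
      rw [heq, hcyc] at this; exact this
  have := (Walk.mem_edges_toSubgraph w).mpr key
  exact (Subgraph.mem_edgeSet).mp this

theorem short_cycle_egirth (hG5 : G.egirth = (5:ℕ)) (n : ℕ) (h3 : 3 ≤ n) (hlt : n < 5)
    (c : ℕ → W) (hcyc : c n = c 0)
    (hadj : ∀ j < n, G.Adj (c j) (c (j+1)))
    (hinj : ∀ i < n, ∀ j < n, c i = c j → i = j) : False := by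
  obtain ⟨w, hcycle, hlen, _, _⟩ := cycle_exists n h3 c hcyc hadj hinj
  have h1 : G.egirth ≤ (w.length : ℕ∞) := le_egirth.mp le_rfl _ w hcycle
  rw [hG5, hlen] at h1
  have : (5:ℕ) ≤ n := by exact_mod_cast h1
  omega

end Bridge

section Main

variable {V : Type*} {G : SimpleGraph V}

/-- A clean connection between two vertices of the embedded copy of `H₀`. -/
structure CleanConn (G : SimpleGraph V) (f : H₀ ↪g G) (a b : V) (k : ℕ) (p : ℕ → V) : Prop where
  ha : a ∈ Set.range ⇑f
  hb : b ∈ Set.range ⇑f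
  hne : a ≠ b
  hnadj : ¬ G.Adj a b
  hp0 : p 0 = a
  hpk : p k = b
  hk2 : 2 ≤ k
  hchain : ∀ i < k, G.Adj (p i) (p (i+1))
  hint : ∀ i, 0 < i → i < k → p i ∉ Set.range ⇑f
  hinj : ∀ i ≤ k, ∀ j ≤ k, p i = p j → i = j
  hchord : ∀ i j, i + 2 ≤ j → j ≤ k → ¬ G.Adj (p i) (p j)
  hatt : ∀ i, 0 < i → i < k → ∀ s ∈ Set.range ⇑f, G.Adj (p i) s →
    (s = a ∧ i = 1) ∨ (s = b ∧ i = k - 1) ∨ (G.Adj s a ∧ G.Adj s b)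

theorem holeKill (hG : G.MemGFamily 2) (f : H₀ ↪g G) {a b : V} {k : ℕ} {p : ℕ → V}
    (cc : CleanConn G f a b k p) {α β : PP} (hα : f α = a) (hβ : f β = b)
    (q : ℕ → PP) (r : ℕ) (hr1 : 1 ≤ r)
    (hq0 : q 0 = β) (hfr : q r = α)
    (hqchain : ∀ i < r, H₀.Adj (q i) (q (i+1)))
    (hqinj' : ∀ i ≤ r, ∀ j ≤ r, q i = q j → i = j)
    (hqind : ∀ i ≤ r, ∀ j ≤ r, H₀.Adj (q i) (q j) → j = i + 1 ∨ i = j + 1)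
    (hqavoid : ∀ j, 0 < j → j < r → ¬(H₀.Adj (q j) α ∧ H₀.Adj (q j) β))
    (hodd : Odd (k + r)) (h7 : 7 ≤ k + r) : False := by
  set n := k + r with hndef
  set c : ℕ → V := fun i => if i ≤ k then p i else f (q (i - k)) with hcdef
  have hcp : ∀ i ≤ k, c i = p i := fun i hi => by simp [hcdef, hi]
  have hcq : ∀ j ≤ r, c (k + j) = f (q j) := by
    intro j hj
    rcases Nat.eq_zero_or_pos j with h0 | h0
    · subst h0
      rw [Nat.add_zero, hcp k le_rfl, cc.hpk, ← hβ, hq0]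
    · have hgt : ¬ (k + j ≤ k) := by omega
      have hkk : k + j - k = j := by omega
      show (if k + j ≤ k then p (k+j) else f (q (k + j - k))) = f (q j)
      rw [if_neg hgt, hkk]
  have hcyc : c n = c 0 := by
    have h1 : c n = f (q r) := hcq r (le_refl r)
    have h2 : c 0 = p 0 := hcp 0 (by omega)
    rw [h1, h2, cc.hp0, hfr, hα]
  -- adjacency along the cycle
  have hadjc : ∀ j < n, G.Adj (c j) (c (j+1)) := by
    intro j hj
    rcases Nat.lt_or_ge j k with hjk | hjk
    · rw [hcp j (by omega), hcp (j+1) (by omega)]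
      exact cc.hchain j hjk
    · obtain ⟨j', rfl⟩ : ∃ j', j = k + j' := ⟨j - k, by omega⟩
      have hj' : j' < r := by omega
      have e1 : c (k + j') = f (q j') := hcq j' (by omega)
      have e2 : c (k + j' + 1) = f (q (j' + 1)) := hcq (j' + 1) (by omega)
      rw [e1, e2]
      exact f.map_rel_iff.mpr (hqchain j' (by omega))
  -- injectivity
  have hinjc : ∀ i < n, ∀ j < n, c i = c j → i = j := by
    have key : ∀ i ≤ k, ∀ j', 0 < j' → j' < r → p i ≠ f (q j') := by
      intro i hi j' hj'0 hj'r heq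
      rcases Nat.eq_or_lt_of_le (Nat.zero_le i) with h0 | h0
      · -- i = 0
        rw [← h0, cc.hp0, ← hα] at heq
        have : α = q j' := f.injective heq
        have : r = j' := hqinj' r (le_refl r) j' (by omega) (by rw [hfr, ← this])
        omega
      · rcases Nat.eq_or_lt_of_le hi with hk' | hk'
        · rw [hk', cc.hpk, ← hβ] at heq
          have : β = q j' := f.injective heq
          have : (0:ℕ) = j' := hqinj' 0 (by omega) j' (by omega) (by rw [hq0, ← this])
          omega
        · exact cc.hint i h0 hk' ⟨q j', heq.symm⟩
    intro i hi j hj h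
    rcases Nat.lt_or_ge i (k+1) with hik | hik <;> rcases Nat.lt_or_ge j (k+1) with hjk | hjk
    · rw [hcp i (by omega), hcp j (by omega)] at h
      exact cc.hinj i (by omega) j (by omega) h
    · obtain ⟨j', rfl⟩ : ∃ j', j = k + j' := ⟨j - k, by omega⟩
      rw [hcp i (by omega), hcq j' (by omega)] at h
      exact absurd h (key i (by omega) j' (by omega) (by omega))
    · obtain ⟨i', rfl⟩ : ∃ i', i = k + i' := ⟨i - k, by omega⟩
      rw [hcq i' (by omega), hcp j (by omega)] at h
      exact absurd h.symm (key j (by omega) i' (by omega) (by omega))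
    · obtain ⟨i', rfl⟩ : ∃ i', i = k + i' := ⟨i - k, by omega⟩
      obtain ⟨j', rfl⟩ : ∃ j', j = k + j' := ⟨j - k, by omega⟩
      rw [hcq i' (by omega), hcq j' (by omega)] at h
      have := hqinj' i' (by omega) j' (by omega) (f.injective h)
      omega
  -- inducedness case analysis
  have hindQ : ∀ i ≤ k, ∀ j', 0 < j' → j' < r → G.Adj (p i) (f (q j')) →
      (i = 0 ∧ j' = r - 1) ∨ (i = k ∧ j' = 1) := by
    intro i hi j' hj'0 hj'r hadj
    rcases Nat.eq_or_lt_of_le (Nat.zero_le i) with h0 | h0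
    · -- i = 0 : a adjacent to q j'
      rw [← h0, cc.hp0, ← hα] at hadj
      have hH : H₀.Adj (q r) (q j') := by rw [hfr]; exact f.map_rel_iff.mp hadj
      rcases hqind r (by omega) j' (by omega) hH with h | h
      · omega
      · left; constructor; omega; omega
    · rcases Nat.eq_or_lt_of_le hi with hk' | hk'
      · rw [hk', cc.hpk, ← hβ] at hadj
        have hH : H₀.Adj (q 0) (q j') := by rw [hq0]; exact f.map_rel_iff.mp hadj
        rcases hqind 0 (by omega) j' (by omega) hH with h | h
        · right; constructor; omega; omega
        · omega
      · -- interior of p adjacent to some s in the range : use hatt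
        have hs : f (q j') ∈ Set.range ⇑f := ⟨q j', rfl⟩
        rcases cc.hatt i h0 hk' (f (q j')) hs hadj with ⟨h1, _⟩ | ⟨h1, _⟩ | ⟨h1, h2⟩
        · rw [← hα] at h1
          have : q j' = α := f.injective h1
          have : j' = r := hqinj' j' (by omega) r (le_refl r) (by rw [this, hfr])
          omega
        · rw [← hβ] at h1
          have : q j' = β := f.injective h1
          have : j' = 0 := hqinj' j' (by omega) 0 (by omega) (by rw [this, hq0])
          omega
        · rw [← hα] at h1
          rw [← hβ] at h2
          exact absurd ⟨f.map_rel_iff.mp h1, f.map_rel_iff.mp h2⟩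
            (hqavoid j' hj'0 (by omega))
  have hindc : ∀ i < n, ∀ j < n, G.Adj (c i) (c j) →
      j = i + 1 ∨ i = j + 1 ∨ (i = 0 ∧ j = n-1) ∨ (j = 0 ∧ i = n-1) := by
    intro i hi j hj hadj
    rcases Nat.lt_or_ge i (k+1) with hik | hik <;> rcases Nat.lt_or_ge j (k+1) with hjk | hjk
    · -- both in the p part
      rw [hcp i (by omega), hcp j (by omega)] at hadj
      rcases Nat.lt_trichotomy i j with h | h | h
      · rcases Nat.lt_or_ge (i+1) j with h2 | h2
        · exact absurd hadj (cc.hchord i j (by omega) (by omega))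
        · left; omega
      · exact absurd rfl (by rw [h] at hadj; exact hadj.ne)
      · rcases Nat.lt_or_ge (j+1) i with h2 | h2
        · exact absurd hadj.symm (cc.hchord j i (by omega) (by omega))
        · right; left; omega
    · obtain ⟨j', rfl⟩ : ∃ j', j = k + j' := ⟨j - k, by omega⟩
      rw [hcp i (by omega), hcq j' (by omega)] at hadj
      rcases hindQ i (by omega) j' (by omega) (by omega) hadj with ⟨h1, h2⟩ | ⟨h1, h2⟩
      · right; right; left; omega
      · left; omega
    · obtain ⟨i', rfl⟩ : ∃ i', i = k + i' := ⟨i - k, by omega⟩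
      rw [hcq i' (by omega), hcp j (by omega)] at hadj
      rcases hindQ j (by omega) i' (by omega) (by omega) hadj.symm with ⟨h1, h2⟩ | ⟨h1, h2⟩
      · right; right; right; omega
      · right; left; omega
    · obtain ⟨i', rfl⟩ : ∃ i', i = k + i' := ⟨i - k, by omega⟩
      obtain ⟨j', rfl⟩ : ∃ j', j = k + j' := ⟨j - k, by omega⟩
      rw [hcq i' (by omega), hcq j' (by omega)] at hadj
      rcases hqind i' (by omega) j' (by omega) (f.map_rel_iff.mp hadj) with h | h
      · left; omega
      · right; left; omega
  have hhole : G.HasHole n := hasHole_of_fn n (by omega) c hcyc hadjc hinjc hindc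
  exact hG.2 n (by simpa [hndef] using hodd) (by omega) hhole

end Main

section Main2

variable {V : Type*} {G : SimpleGraph V}

theorem no_C3 (hG5 : G.egirth = (5:ℕ)) (w x y : V)
    (h1 : G.Adj w x) (h2 : G.Adj x y) (h3 : G.Adj y w) : False := by
  refine short_cycle_egirth hG5 3 (by omega) (by omega)
    (fun i => if i = 1 then x else if i = 2 then y else w) rfl ?_ ?_
  · intro j hj
    interval_cases j
    · exact h1
    · exact h2
    · exact h3
  · intro i hi j hj h
    interval_cases i <;> interval_cases j
    · rfl
    · exact absurd h h1.ne
    · exact absurd h h3.ne'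
    · exact absurd h h1.ne'
    · rfl
    · exact absurd h h2.ne
    · exact absurd h h3.ne
    · exact absurd h h2.ne'
    · rfl

theorem no_C4 (hG5 : G.egirth = (5:ℕ)) (w x y z : V)
    (h1 : G.Adj w x) (h2 : G.Adj x y) (h3 : G.Adj y z) (h4 : G.Adj z w)
    (hwy : w ≠ y) (hxz : x ≠ z) : False := by
  refine short_cycle_egirth hG5 4 (by omega) (by omega)
    (fun i => if i = 1 then x else if i = 2 then y else if i = 3 then z else w) rfl ?_ ?_
  · intro j hj
    interval_cases j
    · exact h1
    · exact h2
    · exact h3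
    · exact h4
  · intro i hi j hj h
    interval_cases i <;> interval_cases j
    · rfl
    · exact absurd h h1.ne
    · exact absurd h hwy
    · exact absurd h h4.ne'
    · exact absurd h h1.ne'
    · rfl
    · exact absurd h h2.ne
    · exact absurd h hxz
    · exact absurd h hwy.symm
    · exact absurd h h2.ne'
    · rfl
    · exact absurd h h3.ne
    · exact absurd h h4.ne
    · exact absurd h hxz.symm
    · exact absurd h h3.ne'
    · rfl

theorem egirth_five (hG : G.MemGFamily 2) : G.egirth = (5:ℕ) := by
  have := hG.1
  norm_num at this
  exact_mod_cast this

theorem kill (hG : G.MemGFamily 2) (f : H₀ ↪g G) {a b : V} {k : ℕ} {p : ℕ → V}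
    (cc : CleanConn G f a b k p) : False := by
  obtain ⟨α, hα⟩ := cc.ha
  obtain ⟨β, hβ⟩ := cc.hb
  have hne : α ≠ β := fun h => cc.hne (by rw [← hα, ← hβ, h])
  have hnadjH : ¬ H₀.Adj α β := fun h => cc.hnadj (by rw [← hα, ← hβ]; exact f.map_rel_iff.mpr h)
  have hG5 : G.egirth = (5:ℕ) := egirth_five hG
  have hk2 := cc.hk2
  rcases Nat.even_or_odd k with hke | hko
  · obtain ⟨hok, hlen⟩ := dataO α β hne hnadjH
    obtain ⟨hL2, hq0, hqr, hch, hinj, hind, hav⟩ := hok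
    rcases hlen with ⟨h4, γex⟩ | h6
    · rcases Nat.lt_or_ge k 4 with hk4 | hk4
      · -- k = 2 : 4-cycle through a common neighbour
        have hk2' : k = 2 := by obtain ⟨m, hm⟩ := hke; omega
        obtain ⟨γ, hγ1, hγ2⟩ := γex
        have hadj1 : G.Adj a (p 1) := by
          have := cc.hchain 0 (by omega); rwa [cc.hp0] at this
        have hadj2 : G.Adj (p 1) b := by
          have := cc.hchain 1 (by omega)
          rw [show (1:ℕ)+1 = k by omega, cc.hpk] at this
          exact this
        have hadj3 : G.Adj b (f γ) := by rw [← hβ]; exact f.map_rel_iff.mpr hγ2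
        have hadj4 : G.Adj (f γ) a := by rw [← hα]; exact (f.map_rel_iff.mpr hγ1).symm
        refine no_C4 hG5 a (p 1) b (f γ) hadj1 hadj2 hadj3 hadj4 cc.hne ?_
        intro h
        exact cc.hint 1 (by omega) (by omega) ⟨γ, h.symm⟩
      · rw [h4] at hqr hch hinj hind hav
        refine holeKill hG f cc hα hβ (fun j => (tabO α β).getD j α) 3 (by omega)
          hq0 hqr (fun i hi => hch i (by omega))
          (fun i hi j hj h => hinj i (by omega) j (by omega) h)
          (fun i hi j hj h => hind i (by omega) j (by omega) h)
          (fun j hj0 hjr => hav j (by omega) hj0) ?_ ?_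
        · obtain ⟨m, hm⟩ := hke; exact ⟨k/2 + 1, by omega⟩
        · omega
    · rw [h6] at hqr hch hinj hind hav
      refine holeKill hG f cc hα hβ (fun j => (tabO α β).getD j α) 5 (by omega)
        hq0 hqr (fun i hi => hch i (by omega))
        (fun i hi j hj h => hinj i (by omega) j (by omega) h)
        (fun i hi j hj h => hind i (by omega) j (by omega) h)
        (fun j hj0 hjr => hav j (by omega) hj0) ?_ ?_
      · obtain ⟨m, hm⟩ := hke; exact ⟨k/2 + 2, by omega⟩
      · omega
  · obtain ⟨hok, hlen⟩ := dataE α β hne hnadjH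
    obtain ⟨hL2, hq0, hqr, hch, hinj, hind, hav⟩ := hok
    rw [hlen] at hqr hch hinj hind hav
    refine holeKill hG f cc hα hβ (fun j => (tabE α β).getD j α) 4 (by omega)
      hq0 hqr (fun i hi => hch i (by omega))
      (fun i hi j hj h => hinj i (by omega) j (by omega) h)
      (fun i hi j hj h => hind i (by omega) j (by omega) h)
      (fun j hj0 hjr => hav j (by omega) hj0) ?_ ?_
    · obtain ⟨m, hm⟩ := hko; exact ⟨m + 2, by omega⟩
    · obtain ⟨m, hm⟩ := hko; omega

theorem pair_bad (hG : G.MemGFamily 2) (f : H₀ ↪g G) {x : V} (hx : x ∉ Set.range ⇑f)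
    {α β : PP} (hne : α ≠ β) (h1 : G.Adj x (f α)) (h2 : G.Adj x (f β)) :
    ¬ H₀.Adj α β ∧ ∀ γ, ¬(H₀.Adj α γ ∧ H₀.Adj β γ) := by
  have hG5 : G.egirth = (5:ℕ) := egirth_five hG
  constructor
  · intro hadj
    exact no_C3 hG5 x (f α) (f β) h1 (f.map_rel_iff.mpr hadj) h2.symm
  · rintro γ ⟨hγ1, hγ2⟩
    refine no_C4 hG5 x (f α) (f γ) (f β) h1 (f.map_rel_iff.mpr hγ1)
      (f.map_rel_iff.mpr hγ2).symm h2.symm ?_ ?_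
    · exact fun h => hx ⟨γ, h.symm⟩
    · exact fun h => hne (f.injective h)

theorem two_lemma (hG : G.MemGFamily 2) (f : H₀ ↪g G) :
    ∀ x ∉ Set.range ⇑f, ∀ α β : PP, G.Adj x (f α) → G.Adj x (f β) → α = β := by
  intro x hx α β h1 h2
  by_contra hne
  have hb := pair_bad hG f hx hne h1 h2
  have honly : ∀ σ : PP, G.Adj x (f σ) → σ = α ∨ σ = β := by
    intro σ hσ
    by_contra hcon
    push_neg at hcon
    have hbs1 := pair_bad hG f hx (show α ≠ σ from fun h => hcon.1 h.symm) h1 hσ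
    have hbs2 := pair_bad hG f hx (show β ≠ σ from fun h => hcon.2 h.symm) h2 hσ
    exact factF2 α β σ ⟨hne, (fun h => hcon.1 h.symm), (fun h => hcon.2 h.symm),
      hb.1, hbs1.1, hbs2.1, hb.2, hbs1.2, hbs2.2⟩
  refine kill hG f (a := f α) (b := f β) (k := 2)
    (p := fun i => if i = 1 then x else if i = 0 then f α else f β) ?_
  refine ⟨⟨α, rfl⟩, ⟨β, rfl⟩, fun h => hne (f.injective h),
    fun h => hb.1 (f.map_rel_iff.mp h), rfl, rfl, le_refl 2, ?_, ?_, ?_, ?_, ?_⟩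
  · intro i hi
    interval_cases i
    · exact h1.symm
    · exact h2
  · intro i h0 h2'
    have : i = 1 := by omega
    subst this
    exact hx
  · intro i hi j hj h
    interval_cases i <;> interval_cases j
    · rfl
    · exact absurd h h1.ne'
    · exact absurd h (fun h' => hne (f.injective h'))
    · exact absurd h h1.ne
    · rfl
    · exact absurd h h2.ne
    · exact absurd h fun h' => hne (f.injective h'.symm)
    · exact absurd h h2.ne'
    · rfl
  · intro i j hij hj
    have : i = 0 ∧ j = 2 := by omega
    obtain ⟨rfl, rfl⟩ := this
    exact fun h => hb.1 (f.map_rel_iff.mp h)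
  · intro i h0 hik s hs hadj
    have : i = 1 := by omega
    subst this
    obtain ⟨σ, rfl⟩ := hs
    rcases honly σ hadj with rfl | rfl
    · exact Or.inl ⟨rfl, rfl⟩
    · exact Or.inr (Or.inl ⟨rfl, rfl⟩)

end Main2

section Main3

variable {V : Type*} {G : SimpleGraph V}

/-- splice out part of a path, gluing index `i` to index `i+d`. -/
def splice (p : ℕ → V) (i d : ℕ) : ℕ → V := fun m => if m ≤ i then p m else p (m + d)

theorem splice_le {p : ℕ → V} {i d m : ℕ} (h : m ≤ i) : splice p i d m = p m := if_pos h

theorem splice_gt {p : ℕ → V} {i d m : ℕ} (h : ¬ m ≤ i) : splice p i d m = p (m + d) := if_neg h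

/-- replace everything after index `i` by the constant `s`. -/
def capend (p : ℕ → V) (i : ℕ) (s : V) : ℕ → V := fun m => if m ≤ i then p m else s

theorem capend_le {p : ℕ → V} {i m : ℕ} {s : V} (h : m ≤ i) : capend p i s m = p m := if_pos h

theorem capend_gt {p : ℕ → V} {i m : ℕ} {s : V} (h : ¬ m ≤ i) : capend p i s m = s := if_neg h

/-- reverse of a path of length `k`. -/
def revp (p : ℕ → V) (k : ℕ) : ℕ → V := fun m => p (k - m)

theorem revp_eq {p : ℕ → V} {k m : ℕ} : revp p k m = p (k - m) := rfl

def Conn (G : SimpleGraph V) (f : H₀ ↪g G) (k : ℕ) : Prop :=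
  ∃ (a b : V) (p : ℕ → V), a ∈ Set.range ⇑f ∧ b ∈ Set.range ⇑f ∧ a ≠ b ∧ ¬G.Adj a b ∧
    p 0 = a ∧ p k = b ∧ 2 ≤ k ∧ (∀ i < k, G.Adj (p i) (p (i+1))) ∧
    (∀ i, 0 < i → i < k → p i ∉ Set.range ⇑f)

theorem conn_false (hG : G.MemGFamily 2) (f : H₀ ↪g G) (hex : ∃ k, Conn G f k) : False := by
  classical
  obtain ⟨k, hck, hmin⟩ : ∃ k, Conn G f k ∧ ∀ m, m < k → ¬ Conn G f m :=
    ⟨Nat.find hex, Nat.find_spec hex, fun m hm => Nat.find_min hex hm⟩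
  obtain ⟨a, b, p, ha, hb, hne, hnadj, hp0, hpk, hk2, hchain, hint⟩ := hck
  have mk : ∀ (a' b' : V) (p' : ℕ → V) (m : ℕ), a' ∈ Set.range ⇑f → b' ∈ Set.range ⇑f →
      a' ≠ b' → ¬G.Adj a' b' → p' 0 = a' → p' m = b' → (∀ i < m, G.Adj (p' i) (p' (i+1))) →
      (∀ i, 0 < i → i < m → p' i ∉ Set.range ⇑f) → Conn G f m := by
    intro a' b' p' m ha' hb' hne' hnadj' h0' hm' hch' hint'
    have hm2 : 2 ≤ m := by
      rcases m with _ | m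
      · exact absurd (by rw [← h0', hm'] : a' = b') hne'
      · rcases m with _ | m
        · have := hch' 0 (by omega)
          rw [h0', hm'] at this
          exact absurd this hnadj'
        · omega
    exact ⟨a', b', p', ha', hb', hne', hnadj', h0', hm', hm2, hch', hint'⟩
  -- injectivity of the minimal connection
  have hord : ∀ i j, i < j → j ≤ k → p i ≠ p j := by
    intro i j hij hjk heq
    rcases Nat.eq_or_lt_of_le hjk with rfl | hj'
    · rcases Nat.eq_zero_or_pos i with rfl | hi0
      · rw [hp0, hpk] at heq; exact hne heq
      · exact hint i hi0 hij (by rw [heq, hpk]; exact hb)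
    · refine absurd (mk a b (splice p i (j-i)) (k - (j-i))
        ha hb hne hnadj (by rw [splice_le (Nat.zero_le i), hp0]) ?_ ?_ ?_) (hmin _ (by omega))
      · rw [splice_gt (by omega : ¬ (k - (j-i) ≤ i))]
        rw [show k - (j-i) + (j-i) = k by omega, hpk]
      · intro m hm
        by_cases h1 : m + 1 ≤ i
        · rw [splice_le (by omega), splice_le h1]
          exact hchain m (by omega)
        · by_cases h2 : m ≤ i
          · have hmi : m = i := by omega
            rw [splice_le h2, splice_gt h1, hmi, show i + 1 + (j-i) = j + 1 by omega, heq]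
            exact hchain j hj'
          · rw [splice_gt h2, splice_gt h1, show m + 1 + (j-i) = (m + (j-i)) + 1 by omega]
            exact hchain (m + (j-i)) (by omega)
      · intro m h0 hmk
        by_cases h2 : m ≤ i
        · rw [splice_le h2]
          exact hint m h0 (by omega)
        · rw [splice_gt h2]
          exact hint (m + (j-i)) (by omega) (by omega)
  have hinj : ∀ i ≤ k, ∀ j ≤ k, p i = p j → i = j := by
    intro i hi j hj h
    rcases Nat.lt_trichotomy i j with hh | hh | hh
    · exact absurd h (hord i j hh hj)
    · exact hh
    · exact absurd h.symm (hord j i hh hi)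
  -- no chords
  have hchord : ∀ i j, i + 2 ≤ j → j ≤ k → ¬ G.Adj (p i) (p j) := by
    intro i j hij hjk hadj
    by_cases hend : i = 0 ∧ j = k
    · obtain ⟨rfl, rfl⟩ := hend
      rw [hp0, hpk] at hadj
      exact hnadj hadj
    · have hd : 1 ≤ j - i - 1 := by omega
      have hdk : k - (j-i-1) < k := by omega
      refine absurd (mk a b (splice p i (j-i-1)) (k - (j-i-1))
        ha hb hne hnadj (by rw [splice_le (Nat.zero_le i), hp0]) ?_ ?_ ?_) (hmin _ hdk)
      · rw [splice_gt (by omega : ¬ (k - (j-i-1) ≤ i))]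
        rw [show k - (j-i-1) + (j-i-1) = k by omega, hpk]
      · intro m hm
        by_cases h1 : m + 1 ≤ i
        · rw [splice_le (by omega), splice_le h1]
          exact hchain m (by omega)
        · by_cases h2 : m ≤ i
          · have hmi : m = i := by omega
            rw [splice_le h2, splice_gt h1, hmi, show i + 1 + (j-i-1) = j by omega]
            exact hadj
          · rw [splice_gt h2, splice_gt h1, show m + 1 + (j-i-1) = (m + (j-i-1)) + 1 by omega]
            exact hchain (m + (j-i-1)) (by omega)
      · intro m h0 hmk
        by_cases h2 : m ≤ i
        · rw [splice_le h2]
          exact hint m h0 (by omega)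
        · rw [splice_gt h2]
          exact hint (m + (j-i-1)) (by omega) (by omega)
  -- attachment structure
  have hatt : ∀ i, 0 < i → i < k → ∀ s ∈ Set.range ⇑f, G.Adj (p i) s →
      (s = a ∧ i = 1) ∨ (s = b ∧ i = k - 1) ∨ (G.Adj s a ∧ G.Adj s b) := by
    intro i h0 hik s hs hadj
    by_cases hsa : s = a
    · subst hsa
      left
      refine ⟨rfl, ?_⟩
      rcases Nat.lt_or_ge i 2 with h | h
      · omega
      · rw [← hp0] at hadj
        exact absurd hadj.symm (hchord 0 i (by omega) (by omega))
    · by_cases hsb : s = b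
      · subst hsb
        right; left
        refine ⟨rfl, ?_⟩
        rcases Nat.lt_or_ge (i+2) (k+1) with h | h
        · rw [← hpk] at hadj
          exact absurd hadj (hchord i k (by omega) (by omega))
        · omega
      · right; right
        constructor
        · by_contra hnsa
          have hc' : Conn G f (i+1) := by
            refine mk a s (capend p i s) (i+1) ha hs
              (fun h => hsa h.symm) (fun h => hnsa h.symm)
              (by rw [capend_le (Nat.zero_le i), hp0])
              (by rw [capend_gt (by omega)]) ?_ ?_
            · intro m hm
              by_cases h1 : m + 1 ≤ i
              · rw [capend_le (by omega), capend_le h1]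
                exact hchain m (by omega)
              · have hmi : m = i := by omega
                rw [capend_le (by omega : m ≤ i), capend_gt h1, hmi]
                exact hadj
            · intro m hm0 hmk
              rw [capend_le (by omega)]
              exact hint m hm0 (by omega)
          rcases Nat.lt_or_ge (i+1) k with hlt | hge
          · exact absurd hc' (hmin _ hlt)
          · obtain ⟨σ, hσ⟩ := hs
            obtain ⟨τ, hτ⟩ := hb
            have hadjb : G.Adj (p i) b := by
              have := hchain i hik
              rwa [show i + 1 = k by omega, hpk] at this
            have heq := two_lemma hG f (p i) (hint i h0 hik) σ τ
              (by rw [hσ]; exact hadj) (by rw [hτ]; exact hadjb)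
            exact hsb (by rw [← hσ, heq, hτ])
        · by_contra hnsb
          have hc' : Conn G f (k-i+1) := by
            refine mk b s (capend (revp p k) (k-i) s) (k-i+1) hb hs
              (fun h => hsb h.symm) (fun h => hnsb h.symm)
              (by rw [capend_le (Nat.zero_le (k-i)), revp_eq, Nat.sub_zero, hpk])
              (by rw [capend_gt (by omega)]) ?_ ?_
            · intro m hm
              by_cases h1 : m + 1 ≤ k - i
              · rw [capend_le (by omega), capend_le h1, revp_eq, revp_eq]
                have := hchain (k - (m+1)) (by omega)
                rw [show k - (m+1) + 1 = k - m by omega] at this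
                exact this.symm
              · have hmi : m = k - i := by omega
                rw [capend_le (by omega : m ≤ k - i), capend_gt h1, revp_eq, hmi,
                  show k - (k - i) = i by omega]
                exact hadj
            · intro m hm0 hmk
              rw [capend_le (by omega), revp_eq]
              exact hint (k - m) (by omega) (by omega)
          rcases Nat.lt_or_ge (k-i+1) k with hlt | hge
          · exact absurd hc' (hmin _ hlt)
          · have hi1 : i = 1 := by omega
            subst hi1
            obtain ⟨σ, hσ⟩ := hs
            obtain ⟨τ, hτ⟩ := ha
            have hadja : G.Adj (p 1) a := by
              have := hchain 0 (by omega)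
              rw [hp0] at this
              exact this.symm
            have heq := two_lemma hG f (p 1) (hint 1 (by omega) (by omega)) σ τ
              (by rw [hσ]; exact hadj) (by rw [hτ]; exact hadja)
            exact hsa (by rw [← hσ, heq, hτ])
  exact kill hG f ⟨ha, hb, hne, hnadj, hp0, hpk, hk2, hchain, hint, hinj, hchord, hatt⟩

end Main3

section Main4

variable {V : Type*} {G : SimpleGraph V}

theorem exists_first_step {X : Set V} (u v : ↑X) (w : (G.induce X).Walk u v)
    (hne : (u:V) ≠ (v:V)) : ∃ y : ↑X, G.Adj u y := by
  cases w with
  | nil => exact absurd rfl hne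
  | cons h _ => exact ⟨_, h⟩

theorem main₀ {V : Type*} (G : SimpleGraph V) [Fintype V] (hG : G.MemGFamily 2)
    (h3c : G.ThreeConnected)
    (hstable : ∀ X : Set V, X.ncard = 3 → G.IsCutset X → ∀ a ∈ X, ∀ b ∈ X, ¬ G.Adj a b)
    (f : H₀ ↪g G) : False := by
  classical
  obtain ⟨d1, d2, d3, d4, d5, d6⟩ := factD
  set u1 := f V01 with hu1def
  set u2 := f V23 with hu2def
  set n1 := f V24 with hn1def
  set n2 := f V34 with hn2def
  have hne12 : u1 ≠ u2 := fun h => d1 (f.injective h)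
  have hne_un1 : u1 ≠ n1 := fun h => d2 (f.injective h)
  have hne_un2 : u1 ≠ n2 := fun h => d3 (f.injective h)
  have hne_2n1 : u2 ≠ n1 := fun h => d4 (f.injective h)
  have hne_2n2 : u2 ≠ n2 := fun h => d5 (f.injective h)
  have hne_n12 : n1 ≠ n2 := fun h => d6 (f.injective h)
  have hadj_u1 : ∀ w, G.Adj u1 w → w ∈ Set.range ⇑f → w = n1 ∨ w = n2 := by
    rintro w hw ⟨γ, rfl⟩
    rcases (factN γ).mp (f.map_rel_iff.mp hw) with rfl | rfl
    · exact Or.inl rfl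
    · exact Or.inr rfl
  -- u1 has a neighbour outside the image
  have hx : ∃ x, G.Adj u1 x ∧ x ∉ Set.range ⇑f := by
    by_contra hcon
    push_neg at hcon
    have hnb : ∀ w, G.Adj u1 w → w = n1 ∨ w = n2 := fun w hw => hadj_u1 w hw (hcon w hw)
    have hcard : ({n1, n2} : Set V).ncard ≤ 2 := by
      refine (Set.ncard_insert_le _ _).trans ?_
      rw [Set.ncard_singleton]
    have hconn := h3c.2 {n1, n2} hcard
    have hu1m : u1 ∈ (({n1, n2} : Set V)ᶜ) := by
      simp only [Set.mem_compl_iff, Set.mem_insert_iff, Set.mem_singleton_iff]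
      push_neg
      exact ⟨hne_un1, hne_un2⟩
    have hu2m : u2 ∈ (({n1, n2} : Set V)ᶜ) := by
      simp only [Set.mem_compl_iff, Set.mem_insert_iff, Set.mem_singleton_iff]
      push_neg
      exact ⟨hne_2n1, hne_2n2⟩
    obtain ⟨w⟩ := hconn.preconnected ⟨u1, hu1m⟩ ⟨u2, hu2m⟩
    obtain ⟨y, hy⟩ := exists_first_step _ _ w hne12
    rcases hnb _ hy with h | h
    · exact y.2 (by rw [h]; exact Set.mem_insert _ _)
    · exact y.2 (by rw [h]; exact Set.mem_insert_of_mem _ rfl)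
  obtain ⟨x, hxadj, hxout⟩ := hx
  -- the stable-cutset hypothesis applied to {u1, n1, n2}
  have hX1card : ({u1, n1, n2} : Set V).ncard = 3 :=
    Set.ncard_eq_three.mpr ⟨u1, n1, n2, hne_un1, hne_un2, hne_n12, rfl⟩
  have hadj_u1n1 : G.Adj u1 n1 := f.map_rel_iff.mpr ((factN V24).mpr (Or.inl rfl))
  have hnc : ¬ G.IsCutset {u1, n1, n2} := fun hcut =>
    hstable _ hX1card hcut u1 (Set.mem_insert _ _) n1
      (Set.mem_insert_of_mem _ (Set.mem_insert _ _)) hadj_u1n1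
  have hconn : (G.induce (({u1, n1, n2} : Set V)ᶜ)).Connected := not_not.mp hnc
  have hxX : x ∈ (({u1, n1, n2} : Set V)ᶜ) := by
    simp only [Set.mem_compl_iff, Set.mem_insert_iff, Set.mem_singleton_iff]
    push_neg
    refine ⟨fun h => hxout ?_, fun h => hxout ?_, fun h => hxout ?_⟩
    · exact ⟨V01, h.symm⟩
    · exact ⟨V24, h.symm⟩
    · exact ⟨V34, h.symm⟩
  have hu2X : u2 ∈ (({u1, n1, n2} : Set V)ᶜ) := by
    simp only [Set.mem_compl_iff, Set.mem_insert_iff, Set.mem_singleton_iff]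
    push_neg
    exact ⟨fun h => hne12 h.symm, hne_2n1, hne_2n2⟩
  obtain ⟨w⟩ := hconn.preconnected ⟨x, hxX⟩ ⟨u2, hu2X⟩
  -- find the first vertex of the walk inside the image of f
  have fh : ∀ (y z' : ↑(({u1, n1, n2} : Set V)ᶜ)) (w : (G.induce (({u1, n1, n2} : Set V)ᶜ)).Walk y z'),
      (z':V) ∈ Set.range ⇑f → (y:V) ∉ Set.range ⇑f →
      ∃ (m : ℕ) (q : ℕ → V), q 0 = (y:V) ∧ 1 ≤ m ∧ (∀ i < m, G.Adj (q i) (q (i+1))) ∧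
        (∀ i < m, q i ∉ Set.range ⇑f) ∧ q m ∈ Set.range ⇑f ∧ q m ∉ ({u1, n1, n2} : Set V) := by
    intro y z' w
    induction w with
    | nil => exact fun hz hy => absurd hz hy
    | @cons y z _ h p ih =>
      intro hz' hy
      by_cases hz : (z:V) ∈ Set.range ⇑f
      · refine ⟨1, fun i => if i = 0 then (y:V) else (z:V), rfl, le_refl 1, ?_, ?_, hz, z.2⟩
        · intro i hi
          have : i = 0 := by omega
          subst this
          exact h
        · intro i hi
          have : i = 0 := by omega
          subst this
          exact hy
      · obtain ⟨m, q, hq0, hm1, hqch, hqout, hqin, hqnX⟩ := ih hz' hz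
        refine ⟨m+1, fun i => if i = 0 then (y:V) else q (i-1), rfl, by omega, ?_, ?_, ?_, ?_⟩
        · intro i hi
          show G.Adj (if i = 0 then (y:V) else q (i-1)) (if i + 1 = 0 then (y:V) else q (i+1-1))
          rcases Nat.eq_zero_or_pos i with rfl | hpos
          · simpa [hq0] using (h : G.Adj (y:V) (z:V))
          · have e1 : (if i = 0 then (y:V) else q (i-1)) = q (i-1) := if_neg (by omega)
            have e2 : (if i + 1 = 0 then (y:V) else q (i+1-1)) = q ((i-1)+1) := by
              rw [if_neg (by omega)]
              congr 1
              omega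
            rw [e1, e2]
            exact hqch (i-1) (by omega)
        · intro i hi
          show (if i = 0 then (y:V) else q (i-1)) ∉ Set.range ⇑f
          rcases Nat.eq_zero_or_pos i with rfl | hpos
          · simpa using hy
          · rw [if_neg (by omega)]
            exact hqout (i-1) (by omega)
        · show (if m + 1 = 0 then (y:V) else q (m+1-1)) ∈ Set.range ⇑f
          rw [if_neg (by omega)]
          simpa using hqin
        · show (if m + 1 = 0 then (y:V) else q (m+1-1)) ∉ ({u1, n1, n2} : Set V)
          rw [if_neg (by omega)]
          simpa using hqnX
  obtain ⟨m, q, hq0, hm1, hqch, hqout, hqin, hqnX⟩ := fh ⟨x, hxX⟩ ⟨u2, hu2X⟩ w ⟨V23, rfl⟩ hxout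
  have hadj_u1t : ¬ G.Adj u1 (q m) := by
    intro hadj
    rcases hadj_u1 _ hadj hqin with h | h
    · exact hqnX (by rw [h]; exact Set.mem_insert_of_mem _ (Set.mem_insert _ _))
    · exact hqnX (by rw [h]; exact Set.mem_insert_of_mem _ (Set.mem_insert_of_mem _ rfl))
  apply conn_false hG f
  refine ⟨m+1, u1, q m, fun i => if i = 0 then u1 else q (i-1), ⟨V01, rfl⟩, hqin, ?_,
    hadj_u1t, rfl, ?_, by omega, ?_, ?_⟩
  · exact fun h => hqnX (by rw [← h]; exact Set.mem_insert _ _)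
  · show (if m + 1 = 0 then u1 else q (m+1-1)) = q m
    rw [if_neg (by omega)]
    congr 1
  · intro i hi
    show G.Adj (if i = 0 then u1 else q (i-1)) (if i + 1 = 0 then u1 else q (i+1-1))
    rcases Nat.eq_zero_or_pos i with rfl | hpos
    · simpa [hq0] using hxadj
    · have e1 : (if i = 0 then u1 else q (i-1)) = q (i-1) := if_neg (by omega)
      have e2 : (if i + 1 = 0 then u1 else q (i+1-1)) = q ((i-1)+1) := by
        rw [if_neg (by omega)]
        congr 1
        omega
      rw [e1, e2]
      exact hqch (i-1) (by omega)
  · intro i h0 hik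
    show (if i = 0 then u1 else q (i-1)) ∉ Set.range ⇑f
    rw [if_neg (by omega)]
    exact hqout (i-1) (by omega)

end Main4

section Trans

def pmap (π : Equiv.Perm (Fin 5)) : PP → PP :=
  fun s => ⟨s.1.map π.toEmbedding, by rw [Finset.card_map]; exact s.2⟩

theorem pmap_inv (π : Equiv.Perm (Fin 5)) (s : PP) : pmap π.symm (pmap π s) = s := by
  apply Subtype.ext
  show (s.1.map π.toEmbedding).map π.symm.toEmbedding = s.1
  rw [Finset.map_map]
  ext a
  simp

theorem pmap_inv' (π : Equiv.Perm (Fin 5)) (s : PP) : pmap π (pmap π.symm s) = s := by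
  have := pmap_inv π.symm s
  rwa [Equiv.symm_symm] at this

def pequiv (π : Equiv.Perm (Fin 5)) : PP ≃ PP where
  toFun := pmap π
  invFun := pmap π.symm
  left_inv := pmap_inv π
  right_inv := pmap_inv' π

theorem pmap_adj (π : Equiv.Perm (Fin 5)) (s t : PP) :
    petersen.Adj (pmap π s) (pmap π t) ↔ petersen.Adj s t := by
  show Disjoint (s.1.map π.toEmbedding) (t.1.map π.toEmbedding) ↔ Disjoint s.1 t.1
  exact Finset.disjoint_map _

theorem pmap_injective (π : Equiv.Perm (Fin 5)) : Function.Injective (pmap π) :=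
  (pequiv π).injective

def delIso (π : Equiv.Perm (Fin 5)) (e : Sym2 PP) (he : Sym2.map (pmap π) e₀ = e) :
    H₀ ≃g petersen.deleteEdges {e} where
  toEquiv := pequiv π
  map_rel_iff' := by
    intro s t
    show (petersen.deleteEdges {e}).Adj (pmap π s) (pmap π t) ↔ H₀.Adj s t
    rw [SimpleGraph.deleteEdges_adj]
    show _ ↔ (petersen.deleteEdges {e₀}).Adj s t
    rw [SimpleGraph.deleteEdges_adj]
    rw [pmap_adj]
    constructor
    · rintro ⟨h1, h2⟩
      refine ⟨h1, fun hmem => h2 ?_⟩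
      rw [Set.mem_singleton_iff] at hmem ⊢
      rw [← he, ← hmem, Sym2.map_pair_eq]
    · rintro ⟨h1, h2⟩
      refine ⟨h1, fun hmem => h2 ?_⟩
      rw [Set.mem_singleton_iff] at hmem ⊢
      rw [← he, ← Sym2.map_pair_eq] at hmem
      exact Sym2.map.injective (pmap_injective π) hmem

theorem transFact : ∀ a b : PP, petersen.Adj a b →
    ∃ π : Equiv.Perm (Fin 5), Sym2.map (pmap π) e₀ = s(a, b) := by decide

end Trans


/-- a 3-connected graph `G ∈ 𝒢₂` whose 3-cutsets are all stable and which
is not isomorphic to the Petersen graph has no induced subgraph isomorphic to the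
Petersen graph minus exactly one edge (keeping all ten vertices). -/
theorem stmt_17 {V : Type*} [Fintype V] (G : SimpleGraph V) (hG : G.MemGFamily 2)
    (h3c : G.ThreeConnected)
    (hstable : ∀ X : Set V, X.ncard = 3 → G.IsCutset X → ∀ a ∈ X, ∀ b ∈ X, ¬ G.Adj a b)
    (hnp : ¬ Nonempty (G ≃g petersen)) :
    ∀ e ∈ petersen.edgeSet, ¬ Nonempty ((petersen.deleteEdges {e}) ↪g G) := by
  intro e
  induction e using Sym2.ind with
  | _ a b =>
    intro he hne
    obtain ⟨f⟩ := hne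
    obtain ⟨π, hπ⟩ := transFact a b ((SimpleGraph.mem_edgeSet petersen).mp he)
    exact main₀ G hG h3c hstable (f.comp (delIso π s(a,b) hπ).toEmbedding)
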